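/- Let ι be a nonempty index set, let X be a finite-dimensional subspace of ℓ∞(ι, ℝ) (the space of bounded real-valued functions on ι with the supremum norm), and let P : ℓ∞(ι, ℝ) → X be a continuous linear projection onto X. Then the closure of P(B), where B is the closed unit ball of ℓ∞(ι, ℝ), is a sufficient enlargement for X. -/

import Mathlib

open Metric
open scoped ENNReal

noncomputable section

universe u

/-- A bounded, closed, convex, symmetric subset `A` of a finite-dimensional normed
space `X` is a sufficient enlargement for `X` if for every Banach space `Y` and every
linear isometric embedding `i : X → Y` there is a continuous linear projection of `Y`
onto `i(X)` mapping the closed unit ball of `Y` into `i(A)`. -/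
def IsSufficientEnlargement {X : Type*} [NormedAddCommGroup X] [NormedSpace ℝ X]
    [FiniteDimensional ℝ X] (A : Set X) : Prop :=
  Bornology.IsBounded A ∧ IsClosed A ∧ Convex ℝ A ∧ A = -A ∧
  ∀ (Y : Type u) [NormedAddCommGroup Y] [NormedSpace ℝ Y] [CompleteSpace Y]
    (i : X →ₗᵢ[ℝ] Y),
    ∃ P : Y →L[ℝ] Y,
      (∀ x : X, P (i x) = i x) ∧
      LinearMap.range P.toLinearMap = LinearMap.range i.toLinearMap ∧
      P '' closedBall 0 1 ⊆ i '' A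

set_option maxHeartbeats 1000000 in
set_option synthInstance.maxHeartbeats 400000 in
/-- If `X` is a finite-dimensional subspace of `ℓ∞(ι, ℝ)` and `P` is a continuous
linear projection of `ℓ∞(ι, ℝ)` onto `X`, then the closure of the image of the closed
unit ball of `ℓ∞(ι, ℝ)` under `P` is a sufficient enlargement for `X`. -/
theorem closure_image_ball_sufficientEnlargement
    (ι : Type*) [Nonempty ι]
    (X : Submodule ℝ (lp (fun _ : ι => ℝ) ∞)) [FiniteDimensional ℝ X]
    (P : (lp (fun _ : ι => ℝ) ∞) →L[ℝ] X)
    (hP : ∀ x : X, P (x : lp (fun _ : ι => ℝ) ∞) = x) :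
    IsSufficientEnlargement (closure (P '' closedBall 0 1)) := by
  set S : Set X := P '' closedBall 0 1 with hS
  have hSneg : S = -S := by
    ext z
    simp only [Set.mem_neg, hS, Set.mem_image, mem_closedBall, dist_zero_right]
    constructor
    · rintro ⟨x, hx, hz⟩
      exact ⟨-x, by simpa using hx, by rw [map_neg, hz]⟩
    · rintro ⟨x, hx, hz⟩
      exact ⟨-x, by simpa using hx, by rw [map_neg, hz, neg_neg]⟩
  refine ⟨((P.lipschitz).isBounded_image isBounded_closedBall).closure,
    isClosed_closure,
    ((convex_closedBall (0 : lp (fun _ : ι => ℝ) ∞) 1).linear_image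
      (P : lp (fun _ : ι => ℝ) ∞ →ₗ[ℝ] X)).closure, ?_, ?_⟩
  · rw [neg_closure, ← hSneg]
  · intro Y _ _ _ i
    -- the range of `i` as a submodule of `Y`
    set R : Submodule ℝ Y := LinearMap.range i.toLinearMap with hR
    set e : X ≃ₗ[ℝ] R := LinearEquiv.ofInjective i.toLinearMap i.injective with he0
    haveI : FiniteDimensional ℝ R := e.finiteDimensional
    have he : ∀ x : X, ((e x : Y)) = i x := fun x => by
      rw [he0]; exact LinearEquiv.ofInjective_apply i.toLinearMap x
    have hesymm : ∀ z : R, i (e.symm z) = (z : Y) := by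
      intro z
      have h1 : e (e.symm z) = z := e.apply_symm_apply z
      calc i (e.symm z) = ((e (e.symm z) : Y)) := (he _).symm
        _ = (z : Y) := by rw [h1]
    -- coordinate functionals on `R`
    set f0 : ι → (R →L[ℝ] ℝ) := fun k =>
      LinearMap.toContinuousLinearMap
        { toFun := fun z => (((e.symm z : X) : lp (fun _ : ι => ℝ) ∞) : ∀ _ : ι, ℝ) k
          map_add' := by
            intro a b
            simp [lp.coeFn_add]
          map_smul' := by
            intro c a
            simp [lp.coeFn_smul] } with hf0
    have hf0_apply : ∀ k (z : R),
        f0 k z = (((e.symm z : X) : lp (fun _ : ι => ℝ) ∞) : ∀ _ : ι, ℝ) k :=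
      fun k z => rfl
    have hf0_bound : ∀ k (z : R), ‖f0 k z‖ ≤ ‖z‖ := by
      intro k z
      rw [hf0_apply]
      have h1 : ‖(((e.symm z : X) : lp (fun _ : ι => ℝ) ∞) : ∀ _ : ι, ℝ) k‖ ≤
          ‖((e.symm z : X) : lp (fun _ : ι => ℝ) ∞)‖ :=
        lp.norm_apply_le_norm ENNReal.top_ne_zero _ k
      have h2 : ‖((e.symm z : X) : lp (fun _ : ι => ℝ) ∞)‖ = ‖(e.symm z : X)‖ := rfl
      have h3 : ‖(e.symm z : X)‖ = ‖i (e.symm z)‖ := (i.norm_map _).symm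
      have h4 : ‖i (e.symm z)‖ = ‖(z : Y)‖ := by rw [hesymm]
      have h5 : ‖(z : Y)‖ = ‖z‖ := rfl
      calc ‖(((e.symm z : X) : lp (fun _ : ι => ℝ) ∞) : ∀ _ : ι, ℝ) k‖
          ≤ ‖((e.symm z : X) : lp (fun _ : ι => ℝ) ∞)‖ := h1
        _ = ‖z‖ := by rw [h2, h3, h4, h5]
    have hf0_norm : ∀ k, ‖f0 k‖ ≤ 1 := fun k =>
      (f0 k).opNorm_le_bound zero_le_one (by simpa using hf0_bound k)
    -- Hahn–Banach extensions
    choose g hg hgnorm using fun k => exists_extension_norm_eq R (f0 k)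
    have hg_bound : ∀ k (y : Y), ‖g k y‖ ≤ ‖y‖ := by
      intro k y
      calc ‖g k y‖ ≤ ‖g k‖ * ‖y‖ := (g k).le_opNorm y
        _ ≤ 1 * ‖y‖ := by
            apply mul_le_mul_of_nonneg_right _ (norm_nonneg y)
            rw [hgnorm k]; exact hf0_norm k
        _ = ‖y‖ := one_mul _
    -- the map `T : Y → ℓ∞`
    have hmem : ∀ y : Y, Memℓp (fun k => g k y) ∞ := by
      intro y
      apply memℓp_infty
      refine ⟨‖y‖, ?_⟩
      rintro r ⟨k, rfl⟩
      exact hg_bound k y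
    set Tlin : Y →ₗ[ℝ] lp (fun _ : ι => ℝ) ∞ :=
      { toFun := fun y => (⟨fun k => g k y, hmem y⟩ : lp (fun _ : ι => ℝ) ∞)
        map_add' := by
          intro a b
          apply lp.ext
          funext k
          simp [lp.coeFn_add]; rfl
        map_smul' := by
          intro c a
          apply lp.ext
          funext k
          simp [lp.coeFn_smul] } with hTlin
    have hTlin_apply : ∀ (y : Y) (k : ι), (Tlin y : ∀ _ : ι, ℝ) k = g k y :=
      fun y k => rfl
    have hTbound : ∀ y : Y, ‖Tlin y‖ ≤ 1 * ‖y‖ := by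
      intro y
      rw [one_mul]
      apply lp.norm_le_of_forall_le (norm_nonneg y)
      intro k
      rw [hTlin_apply]
      exact hg_bound k y
    set T : Y →L[ℝ] lp (fun _ : ι => ℝ) ∞ := Tlin.mkContinuous 1 hTbound with hT
    have hT_apply : ∀ (y : Y) (k : ι), (T y : ∀ _ : ι, ℝ) k = g k y :=
      fun y k => rfl
    have hT_norm : ∀ y : Y, ‖T y‖ ≤ ‖y‖ := fun y => by have h := hTbound y; rw [one_mul] at h; exact h
    -- `T` restricted to `i(X)` recovers the original element
    have hTi : ∀ x : X, T (i x) = (x : lp (fun _ : ι => ℝ) ∞) := by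
      intro x
      apply lp.ext
      funext k
      rw [hT_apply]
      have hx : i x ∈ R := ⟨x, rfl⟩
      have h1 : g k ((⟨i x, hx⟩ : R) : Y) = f0 k ⟨i x, hx⟩ := hg k ⟨i x, hx⟩
      have h2 : e.symm (⟨i x, hx⟩ : R) = x := by
        apply e.injective
        rw [e.apply_symm_apply]
        exact Subtype.ext (he x).symm
      have h3 : f0 k (⟨i x, hx⟩ : R) = ((x : lp (fun _ : ι => ℝ) ∞) : ∀ _ : ι, ℝ) k := by
        rw [hf0_apply, h2]
      calc g k (i x) = g k ((⟨i x, hx⟩ : R) : Y) := rfl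
        _ = ((x : lp (fun _ : ι => ℝ) ∞) : ∀ _ : ι, ℝ) k := by rw [h1, h3]
    -- the projection
    refine ⟨(i.toContinuousLinearMap.comp P).comp T, ?_, ?_, ?_⟩
    · intro x
      simp only [ContinuousLinearMap.comp_apply, LinearIsometry.coe_toContinuousLinearMap]
      rw [hTi x, hP x]
    · apply le_antisymm
      · rintro y ⟨w, rfl⟩
        exact ⟨P (T w), rfl⟩
      · rintro y ⟨x, rfl⟩
        refine ⟨i.toLinearMap x, ?_⟩
        simp only [ContinuousLinearMap.comp_apply, LinearIsometry.coe_toContinuousLinearMap,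
          LinearIsometry.coe_toLinearMap, ContinuousLinearMap.coe_coe]
        rw [hTi x, hP x]
    · rintro z ⟨y, hy, rfl⟩
      simp only [mem_closedBall, dist_zero_right] at hy
      refine ⟨P (T y), ?_, rfl⟩
      apply subset_closure
      exact ⟨T y, by simpa using (hT_norm y).trans hy, rfl⟩

end
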